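/- Let R be a domain containing a field k of characteristic zero, n ≥ 2, and let D be a triangular locally nilpotent R-derivation of R[X₁,...,Xₙ], i.e., D(Xᵢ) ∈ R[X₁,...,X_{i-1}] for all i. Then ker(D) is non-rigid: it admits a nonzero locally nilpotent derivation. -/

import Mathlib

open MvPolynomial

set_option linter.unusedSectionVars false
set_option maxHeartbeats 1000000
set_option synthInstance.maxHeartbeats 400000

noncomputable section TriangularAux

namespace TriangularAux

variable {S A B : Type*} [CommRing S] [CommRing A] [Algebra S A]

/-- Restrict a derivation to an invariant subalgebra. -/
def restrictDer (E : Derivation S A A) (T : Subalgebra S A)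
    (h : ∀ x ∈ T, E x ∈ T) : Derivation S T T where
  toFun x := ⟨E x, h x x.2⟩
  map_add' x y := Subtype.ext (by simp)
  map_smul' r x := Subtype.ext (by simp)
  map_one_eq_zero' := Subtype.ext (by simp)
  leibniz' x y := Subtype.ext (by
    simp [Derivation.leibniz, smul_eq_mul])

@[simp] lemma restrictDer_apply (E : Derivation S A A) (T : Subalgebra S A)
    (h : ∀ x ∈ T, E x ∈ T) (x : T) : (restrictDer E T h x : A) = E x := rfl

lemma restrictDer_iterate (E : Derivation S A A) (T : Subalgebra S A)
    (h : ∀ x ∈ T, E x ∈ T) (m : ℕ) (x : T) :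
    ((⇑(restrictDer E T h))^[m] x : A) = (⇑E)^[m] (x : A) := by
  induction m generalizing x with
  | zero => rfl
  | succ m ih =>
    rw [Function.iterate_succ_apply, Function.iterate_succ_apply, ih]
    rfl

variable [CommRing B] [Algebra S B]

/-- Conjugate a derivation by an algebra isomorphism. -/
def conjDer (e : A ≃ₐ[S] B) (E : Derivation S A A) : Derivation S B B where
  toFun x := e (E (e.symm x))
  map_add' x y := by simp
  map_smul' r x := by simp
  map_one_eq_zero' := by simp
  leibniz' x y := by
    show e (E (e.symm (x * y))) = x * e (E (e.symm y)) + y * e (E (e.symm x))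
    rw [map_mul, Derivation.leibniz, smul_eq_mul, smul_eq_mul, map_add, map_mul, map_mul,
      AlgEquiv.apply_symm_apply, AlgEquiv.apply_symm_apply]

@[simp] lemma conjDer_apply (e : A ≃ₐ[S] B) (E : Derivation S A A) (x : B) :
    conjDer e E x = e (E (e.symm x)) := rfl

lemma conjDer_iterate (e : A ≃ₐ[S] B) (E : Derivation S A A) (m : ℕ) (x : B) :
    (⇑(conjDer e E))^[m] x = e ((⇑E)^[m] (e.symm x)) := by
  induction m generalizing x with
  | zero => simp
  | succ m ih =>
    rw [Function.iterate_succ_apply, Function.iterate_succ_apply, ih, conjDer_apply,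
      AlgEquiv.symm_apply_apply]

lemma derivation_sum_apply {ι : Type*} (s : Finset ι) (E : ι → Derivation S A A) (x : A) :
    (∑ l ∈ s, E l) x = ∑ l ∈ s, E l x := by
  induction s using Finset.cons_induction with
  | empty => simp
  | cons a s ha ih => rw [Finset.sum_cons, Finset.sum_cons, Derivation.add_apply, ih]

variable {R : Type*} [CommRing R] {σ : Type*}

open MvPolynomial

lemma pderiv_sum_support (j : σ) (p : MvPolynomial σ R) :
    pderiv j p = ∑ t ∈ p.support, monomial (t - Finsupp.single j 1) (coeff t p * t j) := by
  conv_lhs => rw [← support_sum_monomial_coeff p]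
  rw [map_sum]
  simp [pderiv_monomial]

lemma coeff_pderiv_sub (j : σ) (p : MvPolynomial σ R) (t : σ →₀ ℕ) (ht : t ∈ p.support)
    (htj : t j ≠ 0) :
    coeff (t - Finsupp.single j 1) (pderiv j p) = coeff t p * t j := by
  classical
  rw [pderiv_sum_support, coeff_sum, Finset.sum_eq_single t]
  · simp [coeff_monomial]
  · intro u hu hut
    rw [coeff_monomial]
    split_ifs with h
    · by_cases huj : u j = 0
      · simp [huj]
      · exfalso
        apply hut
        have h1 : Finsupp.single j 1 ≤ u := by
          rwa [Finsupp.single_le_iff, Nat.one_le_iff_ne_zero]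
        have h2 : Finsupp.single j 1 ≤ t := by
          rwa [Finsupp.single_le_iff, Nat.one_le_iff_ne_zero]
        calc u = u - Finsupp.single j 1 + Finsupp.single j 1 := (tsub_add_cancel_of_le h1).symm
        _ = t - Finsupp.single j 1 + Finsupp.single j 1 := by rw [h]
        _ = t := tsub_add_cancel_of_le h2
    · rfl
  · intro h; exact absurd ht h

lemma pderiv_ne_zero_of_mem_vars [CharZero R] [NoZeroDivisors R] {j : σ}
    {p : MvPolynomial σ R} (h : j ∈ p.vars) : pderiv j p ≠ 0 := by
  obtain ⟨t, ht, htj⟩ := (mem_vars j).1 h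
  have htj' : t j ≠ 0 := Finsupp.mem_support_iff.1 htj
  intro h0
  have hco := coeff_pderiv_sub j p t ht htj'
  rw [h0, coeff_zero] at hco
  exact mul_ne_zero (mem_support_iff.1 ht) (Nat.cast_ne_zero.2 htj') hco.symm

lemma totalDegree_pderiv_lt (j : σ) {p : MvPolynomial σ R}
    (hp : pderiv j p ≠ 0) : (pderiv j p).totalDegree < p.totalDegree := by
  have hjv : j ∈ p.vars := by
    by_contra hj
    exact hp (pderiv_eq_zero_of_notMem_vars hj)
  obtain ⟨t0, ht0, hjt0⟩ := (mem_vars j).1 hjv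
  have hd1 : 1 ≤ p.totalDegree := by
    calc 1 ≤ t0 j := Nat.one_le_iff_ne_zero.2 (Finsupp.mem_support_iff.1 hjt0)
    _ ≤ p.degreeOf j := by rw [degreeOf_eq_sup]; exact Finset.le_sup (f := fun t => t j) ht0
    _ ≤ p.totalDegree := degreeOf_le_totalDegree p j
  rw [pderiv_sum_support]
  apply lt_of_le_of_lt (totalDegree_finset_sum _ _)
  rw [Finset.sup_lt_iff (by rw [Nat.bot_eq_zero]; omega : (⊥ : ℕ) < p.totalDegree)]
  intro t ht
  by_cases htj : t j = 0
  · simp only [htj, Nat.cast_zero, mul_zero, map_zero, totalDegree_zero]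
    omega
  · have hle : Finsupp.single j 1 ≤ t := by
      rwa [Finsupp.single_le_iff, Nat.one_le_iff_ne_zero]
    have hsum : (t - Finsupp.single j 1).sum (fun _ e => e) + 1 = t.sum (fun _ e => e) := by
      conv_rhs => rw [← tsub_add_cancel_of_le hle]
      rw [Finsupp.sum_add_index' (fun _ => rfl) (fun _ _ _ => rfl),
        Finsupp.sum_single_index rfl]
    have hts : t.sum (fun _ e => e) ≤ p.totalDegree := le_totalDegree ht
    have hmono : (monomial (t - Finsupp.single j 1) (coeff t p * (t j : R))).totalDegree
        ≤ (t - Finsupp.single j 1).sum (fun _ e => e) := by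
      by_cases hc : (coeff t p * (t j : R)) = 0
      · simp [hc]
      · exact le_of_eq (totalDegree_monomial _ hc)
    calc (monomial (t - Finsupp.single j 1) (coeff t p * (t j : R))).totalDegree
        ≤ (t - Finsupp.single j 1).sum (fun _ e => e) := hmono
      _ < p.totalDegree := by omega

lemma pderiv_iterate_zero (j : σ) (p : MvPolynomial σ R) :
    ∃ m : ℕ, (⇑(pderiv (R := R) j))^[m] p = 0 := by
  generalize hdeg : p.totalDegree = d
  induction d using Nat.strong_induction_on generalizing p with
  | _ d ih =>
    by_cases h0 : pderiv j p = 0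
    · exact ⟨1, h0⟩
    · obtain ⟨m, hm⟩ := ih (pderiv j p).totalDegree (hdeg ▸ totalDegree_pderiv_lt j h0) _ rfl
      exact ⟨m + 1, by rwa [Function.iterate_succ_apply]⟩

end TriangularAux

end TriangularAux

variable {k R : Type*} [Field k] [CharZero k] [CommRing R] [IsDomain R] [Algebra k R]

/-- A derivation is locally nilpotent if every element is killed by some iterate. -/
def IsLocallyNilpotentDeriv {S A : Type*} [CommRing S] [CommRing A] [Algebra S A]
    (D : Derivation S A A) : Prop :=
  ∀ x : A, ∃ n : ℕ, (⇑D)^[n] x = 0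

/-- The kernel of a derivation, as a subalgebra. -/
def Derivation.kerSubalgebra {S A : Type*} [CommRing S] [CommRing A] [Algebra S A]
    (D : Derivation S A A) : Subalgebra S A where
  carrier := {b | D b = 0}
  mul_mem' := by
    intro a b ha hb
    simp only [Set.mem_setOf_eq] at *
    rw [D.leibniz]
    simp [ha, hb]
  add_mem' := by
    intro a b ha hb
    simp only [Set.mem_setOf_eq] at *
    simp [ha, hb]
  algebraMap_mem' := by intro r; simp [Set.mem_setOf_eq]

/-- A subalgebra (e.g. the kernel of a derivation) is non-rigid if it admits a nonzero
locally nilpotent derivation. -/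
def NonRigid {S A : Type*} [CommRing S] [CommRing A] [Algebra S A]
    (T : Subalgebra S A) : Prop :=
  ∃ δ : Derivation S T T, δ ≠ 0 ∧ IsLocallyNilpotentDeriv δ

/-- The kernel of a triangular locally nilpotent R-derivation of R[X₁,…,Xₙ], n ≥ 2,
is non-rigid. -/
theorem kernel_nonrigid_of_triangular {n : ℕ} (hn : 2 ≤ n)
    (D : Derivation R (MvPolynomial (Fin n) R) (MvPolynomial (Fin n) R))
    (hLND : IsLocallyNilpotentDeriv D)
    (htri : ∀ i : Fin n, D (X i) ∈ MvPolynomial.supported R {j : Fin n | j < i}) :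
    NonRigid D.kerSubalgebra := by
  classical
  by_cases hJ : ∃ j : Fin n, ∃ x ∈ D.kerSubalgebra, pderiv j x ≠ 0
  · -- Case 1: some partial derivative is nonzero on the kernel; take the largest such.
    have hsne : (Finset.univ.filter
        (fun j : Fin n => ∃ x ∈ D.kerSubalgebra, pderiv j x ≠ 0)).Nonempty := by
      obtain ⟨j, hj⟩ := hJ
      exact ⟨j, Finset.mem_filter.2 ⟨Finset.mem_univ j, hj⟩⟩
    set j := (Finset.univ.filter
        (fun j : Fin n => ∃ x ∈ D.kerSubalgebra, pderiv j x ≠ 0)).max' hsne with hj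
    obtain ⟨a, haker, hane⟩ : ∃ x ∈ D.kerSubalgebra, pderiv j x ≠ 0 :=
      (Finset.mem_filter.1 (Finset.max'_mem _ hsne)).2
    have hmax : ∀ l : Fin n, j < l → ∀ x ∈ D.kerSubalgebra, pderiv l x = 0 := by
      intro l hl x hx
      by_contra hne
      have hls : l ∈ Finset.univ.filter
          (fun j : Fin n => ∃ x ∈ D.kerSubalgebra, pderiv j x ≠ 0) :=
        Finset.mem_filter.2 ⟨Finset.mem_univ l, x, hx, hne⟩
      exact absurd (Finset.le_max' _ l hls) (not_le.2 hl)
    set P : Derivation R (MvPolynomial (Fin n) R) (MvPolynomial (Fin n) R) := pderiv j with hP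
    have hcomm : ⁅P, D⁆ = ∑ l : Fin n, (pderiv j (D (X l))) • pderiv l := by
      apply derivation_ext
      intro i
      rw [Derivation.commutator_apply, TriangularAux.derivation_sum_apply, hP]
      have h2 : D (pderiv j (X i)) = 0 := by
        by_cases hij : i = j
        · subst hij; rw [pderiv_X_self, Derivation.map_one_eq_zero]
        · rw [pderiv_X_of_ne hij, map_zero]
      rw [h2, sub_zero]
      rw [Finset.sum_eq_single i]
      · rw [Derivation.smul_apply, pderiv_X_self, smul_eq_mul, mul_one]
      · intro l _ hli
        rw [Derivation.smul_apply, pderiv_X_of_ne (Ne.symm hli), smul_zero]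
      · intro h; exact absurd (Finset.mem_univ i) h
    have hmap : ∀ x ∈ D.kerSubalgebra, pderiv j x ∈ D.kerSubalgebra := by
      intro x hx
      have hx' : D x = 0 := hx
      have h1 : ⁅P, D⁆ x = pderiv j (D x) - D (pderiv j x) :=
        Derivation.commutator_apply _
      have h2 : ⁅P, D⁆ x = 0 := by
        rw [hcomm, TriangularAux.derivation_sum_apply]
        apply Finset.sum_eq_zero
        intro l _
        rw [Derivation.smul_apply, smul_eq_mul]
        rcases le_or_gt l j with hlj | hjl
        · have hz : pderiv j (D (X l)) = 0 := by
            apply pderiv_eq_zero_of_notMem_vars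
            intro hmem
            have hlt := (mem_supported.1 (htri l)) hmem
            rw [Set.mem_setOf_eq] at hlt
            exact absurd hlt (not_lt.2 hlj)
          rw [hz, zero_mul]
        · rw [hmax l hjl x hx, mul_zero]
      show D (pderiv j x) = 0
      rw [h1, hx', map_zero, zero_sub, neg_eq_zero] at h2
      exact h2
    refine ⟨TriangularAux.restrictDer (pderiv j) D.kerSubalgebra hmap, ?_, ?_⟩
    · intro hzero
      apply hane
      have h := congrArg Subtype.val (DFunLike.congr_fun hzero ⟨a, haker⟩)
      simpa using h
    · intro x
      obtain ⟨m, hm⟩ := TriangularAux.pderiv_iterate_zero j (x : MvPolynomial (Fin n) R)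
      refine ⟨m, Subtype.ext ?_⟩
      rw [TriangularAux.restrictDer_iterate]
      simpa using hm
  · -- Case 2: all partial derivatives vanish on the kernel.
    push_neg at hJ
    obtain ⟨p, hp⟩ := CharP.exists R
    haveI : CharP R p := hp
    set i0 : Fin n := ⟨0, by omega⟩ with hi0
    set i1 : Fin n := ⟨1, by omega⟩ with hi1
    rcases CharP.char_is_prime_or_zero R p with hprime | hzero
    · -- characteristic p prime: the kernel is R[X₀ᵖ, …, X_{n-1}ᵖ], a polynomial ring.
      have hppos : 0 < p := hprime.pos
      set φ : MvPolynomial (Fin n) R →ₐ[R] MvPolynomial (Fin n) R :=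
        aeval (fun i => X i ^ p) with hφ
      have hmono : ∀ (u : Fin n →₀ ℕ) (c : R), φ (monomial u c) = monomial (p • u) c := by
        intro u c
        rw [hφ, aeval_monomial, monomial_eq]
        have hsm : p • u = Finsupp.mapRange (p * ·) (mul_zero p) u := by
          ext i; simp [Finsupp.smul_apply, smul_eq_mul]
        rw [hsm, Finsupp.prod_mapRange_index (fun i => pow_zero _)]
        rw [algebraMap_eq]
        congr 1
        exact Finsupp.prod_congr fun i _ => (pow_mul _ _ _).symm
      have hφsum : ∀ q : MvPolynomial (Fin n) R,
          φ q = ∑ t ∈ q.support, monomial (p • t) (coeff t q) := by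
        intro q
        conv_lhs => rw [← support_sum_monomial_coeff q]
        rw [map_sum]
        exact Finset.sum_congr rfl fun t _ => hmono t (coeff t q)
      have hcoeffφ : ∀ (q : MvPolynomial (Fin n) R) (t : Fin n →₀ ℕ),
          coeff (p • t) (φ q) = coeff t q := by
        intro q t
        rw [hφsum, coeff_sum, Finset.sum_eq_single t]
        · simp [coeff_monomial]
        · intro u hu hut
          rw [coeff_monomial, if_neg]
          intro h
          apply hut
          ext i
          have h' := congrArg (fun f => f i) h
          simp only [Finsupp.smul_apply, smul_eq_mul] at h'
          exact Nat.eq_of_mul_eq_mul_left hppos h'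
        · intro h
          rw [coeff_monomial, if_pos rfl, notMem_support_iff.1 h]
      have hφinj : Function.Injective φ := by
        intro q1 q2 h
        apply MvPolynomial.ext
        intro t
        rw [← hcoeffφ q1 t, ← hcoeffφ q2 t, h]
      have hpB : ((p : ℕ) : MvPolynomial (Fin n) R) = 0 := by
        rw [← map_natCast (C : R →+* MvPolynomial (Fin n) R) p, CharP.cast_eq_zero R p, map_zero]
      have hXp : ∀ i : Fin n, D (X i ^ p) = 0 := by
        intro i
        rw [Derivation.leibniz_pow, nsmul_eq_mul, hpB, zero_mul]
      have hrange_le : ∀ q, D (φ q) = 0 := by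
        intro q
        induction q using MvPolynomial.induction_on with
        | C c => rw [hφ, aeval_C]; exact D.map_algebraMap c
        | add q1 q2 h1 h2 => rw [map_add, map_add, h1, h2, add_zero]
        | mul_X q i hq =>
          rw [map_mul, hφ, aeval_X, D.leibniz, hq, hXp, smul_zero, smul_zero, add_zero]
      have hker_le : ∀ x ∈ D.kerSubalgebra, x ∈ φ.range := by
        intro x hx
        have hdvd : ∀ t ∈ x.support, ∀ l : Fin n, p ∣ t l := by
          intro t ht l
          by_cases htl : t l = 0
          · rw [htl]; exact dvd_zero p
          · have hco := TriangularAux.coeff_pderiv_sub l x t ht htl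
            rw [hJ l x hx, coeff_zero] at hco
            rcases mul_eq_zero.1 hco.symm with h | h
            · exact absurd h (mem_support_iff.1 ht)
            · exact (CharP.cast_eq_zero_iff R p (t l)).1 h
        rw [AlgHom.mem_range]
        refine ⟨∑ t ∈ x.support, monomial (t.mapRange (· / p) (Nat.zero_div p)) (coeff t x), ?_⟩
        rw [map_sum]
        rw [Finset.sum_congr rfl (fun t ht => ?_), support_sum_monomial_coeff]
        rw [hmono]
        have ht' : p • t.mapRange (· / p) (Nat.zero_div p) = t := by
          ext l
          simp only [Finsupp.smul_apply, smul_eq_mul, Finsupp.mapRange_apply]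
          exact Nat.mul_div_cancel' (hdvd t ht l)
        rw [ht']
      have hrange : φ.range = D.kerSubalgebra := by
        apply le_antisymm
        · intro x hx
          rw [AlgHom.mem_range] at hx
          obtain ⟨q, rfl⟩ := hx
          exact hrange_le q
        · exact hker_le
      set e : MvPolynomial (Fin n) R ≃ₐ[R] D.kerSubalgebra :=
        (AlgEquiv.ofInjective φ hφinj).trans (Subalgebra.equivOfEq _ _ hrange) with he
      refine ⟨TriangularAux.conjDer e (pderiv i0), ?_, ?_⟩
      · intro hzero
        have h1 := DFunLike.congr_fun hzero (e (X i0))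
        rw [TriangularAux.conjDer_apply, AlgEquiv.symm_apply_apply, pderiv_X_self, map_one,
          Derivation.zero_apply] at h1
        have h2 := congrArg Subtype.val h1
        rw [OneMemClass.coe_one, ZeroMemClass.coe_zero] at h2
        exact one_ne_zero h2
      · intro x
        obtain ⟨m, hm⟩ := TriangularAux.pderiv_iterate_zero i0
          ((e.symm x : MvPolynomial (Fin n) R))
        refine ⟨m, ?_⟩
        rw [TriangularAux.conjDer_iterate, hm, map_zero]
    · -- characteristic zero: contradiction with a nonconstant kernel element.
      exfalso
      haveI : CharP R 0 := hzero ▸ hp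
      haveI : CharZero R := CharP.charP_to_charZero R
      have h0 : {j : Fin n | j < i0} = (∅ : Set (Fin n)) := by
        ext i; simp [hi0, Fin.lt_def]
      have hD0 : D (X i0) ∈ supported R (∅ : Set (Fin n)) := h0 ▸ htri i0
      rw [supported_empty, Algebra.mem_bot] at hD0
      obtain ⟨r, hr⟩ := hD0
      obtain ⟨a0, ha0, ha0n⟩ : ∃ a, D a = 0 ∧ a ∉ supported R (∅ : Set (Fin n)) := by
        by_cases hr0 : r = 0
        · refine ⟨X i0, by rw [← hr, hr0, map_zero], ?_⟩
          rw [X_mem_supported]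
          exact Set.notMem_empty i0
        · set g := D (X i1) with hg
          have hset1 : {j : Fin n | j < i1} = ({i0} : Set (Fin n)) := by
            ext i
            simp only [Set.mem_setOf_eq, Set.mem_singleton_iff, Fin.lt_def, hi0, hi1, Fin.ext_iff]
            omega
          have hgs : g ∈ supported R ({i0} : Set (Fin n)) := hset1 ▸ htri i1
          have hgvars : ↑g.vars ⊆ ({i0} : Set (Fin n)) := mem_supported.1 hgs
          set M : ℕ := ∏ t ∈ g.support, (t i0 + 1) with hM
          have hMdvd : ∀ t ∈ g.support, (t i0 + 1) ∣ M := fun t ht =>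
            Finset.dvd_prod_of_mem _ ht
          have hMpos : 0 < M := Finset.prod_pos (fun t _ => Nat.succ_pos _)
          set H : MvPolynomial (Fin n) R :=
            ∑ t ∈ g.support,
              monomial (t + Finsupp.single i0 1) (((M / (t i0 + 1) : ℕ) : R) * coeff t g)
            with hH
          have hpd : pderiv i0 H = C (M : R) * g := by
            rw [hH, map_sum]
            conv_rhs => rw [← support_sum_monomial_coeff g, Finset.mul_sum]
            refine Finset.sum_congr rfl fun t ht => ?_
            rw [pderiv_monomial, C_mul_monomial, add_tsub_cancel_right]
            simp only [Finsupp.add_apply, Finsupp.single_eq_same]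
            congr 1
            rw [mul_right_comm, ← Nat.cast_mul, Nat.div_mul_cancel (hMdvd t ht)]
          have hHvars : ↑H.vars ⊆ ({i0} : Set (Fin n)) := by
            intro i hi
            rw [hH] at hi
            obtain ⟨t, ht, hit⟩ := Finset.mem_biUnion.1 (vars_sum_subset _ _ (Finset.mem_coe.1 hi))
            by_cases hc : ((M / (t i0 + 1) : ℕ) : R) * coeff t g = 0
            · rw [hc, monomial_zero, vars_0] at hit
              exact absurd hit (Finset.notMem_empty i)
            · rw [vars_monomial hc] at hit
              rcases Finset.mem_union.1 (Finsupp.support_add hit) with h | h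
              · exact hgvars (Finset.mem_coe.2 ((mem_vars i).2 ⟨t, ht, h⟩))
              · simpa using Finsupp.support_single_subset h
          have hDH : D H = C r * (C (M : R) * g) := by
            have heq : Set.EqOn (⇑D ∘ X)
                (⇑((C r : MvPolynomial (Fin n) R) • pderiv i0) ∘ X) ({i0} : Set (Fin n)) := by
              intro i hi
              rw [Set.mem_singleton_iff] at hi
              subst hi
              simp only [Function.comp_apply, Derivation.smul_apply, pderiv_X_self,
                smul_eq_mul, mul_one]
              rw [← hr, algebraMap_eq]
            have h := derivation_eqOn_supported heq (mem_supported.2 hHvars)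
            rw [h, Derivation.smul_apply, smul_eq_mul, hpd]
          refine ⟨C (r * (M : R)) * X i1 - H, ?_, ?_⟩
          · rw [map_sub, hDH, D.leibniz]
            simp only [smul_eq_mul, derivation_C, mul_zero, add_zero]
            rw [map_mul, ← hg]
            ring
          · intro hmem
            rw [supported_empty, Algebra.mem_bot] at hmem
            obtain ⟨s0, hs0⟩ := hmem
            have h1 : coeff (Finsupp.single i1 1) (C (r * (M : R)) * X i1) = r * (M : R) := by
              rw [coeff_C_mul, coeff_X, if_pos rfl, mul_one]
            have h2 : coeff (Finsupp.single i1 1) H = 0 := by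
              rw [hH, coeff_sum]
              apply Finset.sum_eq_zero
              intro t ht
              rw [coeff_monomial, if_neg]
              intro hco
              have h' := congrArg (fun f => f i0) hco
              have hne : i1 ≠ i0 := by simp [hi0, hi1, Fin.ext_iff]
              simp [Finsupp.add_apply, Finsupp.single_eq_same,
                Finsupp.single_eq_of_ne' hne] at h'
            have h3 : coeff (Finsupp.single i1 1)
                ((algebraMap R (MvPolynomial (Fin n) R)) s0) = 0 := by
              rw [algebraMap_eq, coeff_C, if_neg]
              intro hco
              have h' := congrArg (fun f => f i1) hco
              simp [Finsupp.single_eq_same] at h'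
            rw [hs0, coeff_sub, h1, h2, sub_zero] at h3
            exact (mul_ne_zero hr0 (Nat.cast_ne_zero.2 (by omega))) h3
      apply ha0n
      rw [mem_supported]
      intro i hi
      exfalso
      exact TriangularAux.pderiv_ne_zero_of_mem_vars (Finset.mem_coe.1 hi) (hJ i a0 ha0)
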